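/- Let (I₀, ≤, ∨, 0) be a join-semilattice with 0, Λ a nontrivial group, and G₀ = ∗_{a ∈ I₀} Λ_a the free product of copies Λ_a of Λ indexed by I₀. Define δ₀ : G₀ → I₀ by δ₀(e) = 0 and δ₀(g) = sup F, where F is the finite set of indices a such that a letter from Λ_a \ {e} occurs in the reduced expression of g. Then: (i) δ₀ is a valuation; (ii) δ₀ is surjective; (iii) for all a, b ∈ I₀ there exist g, h ∈ G₀ with δ₀(g) = a, δ₀(h) = b and δ₀(gh) = a ∨ b. -/

import Mathlib

/-- The valuation `δ₀` on the free product `G₀ = ∗_{a ∈ I₀} Λ_a` of copies of `Λ` indexed by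
`I₀`: `δ₀(g)` is the join of the (finitely many) indices `a` such that a letter from
`Λ_a \ {e}` occurs in the reduced expression of `g` (the empty join being `⊥ = 0`). -/
noncomputable def delta0 {I₀ : Type*} [SemilatticeSup I₀] [OrderBot I₀] [DecidableEq I₀]
    {Λ : Type*} [Group Λ] [DecidableEq Λ]
    (x : Monoid.CoprodI (fun _ : I₀ => Λ)) : I₀ :=
  ((Monoid.CoprodI.Word.equiv x).toList.map Sigma.fst).foldr (· ⊔ ·) ⊥

open Monoid

set_option linter.unusedSectionVars false

namespace Delta0Aux

variable {I₀ : Type*} [SemilatticeSup I₀] [OrderBot I₀] [DecidableEq I₀]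
variable {Λ : Type*} [Group Λ] [DecidableEq Λ]

lemma foldr_sup_le_iff (l : List I₀) (c : I₀) :
    l.foldr (· ⊔ ·) ⊥ ≤ c ↔ ∀ a ∈ l, a ≤ c := by
  induction l with
  | nil => simp
  | cons x l ih => simp [sup_le_iff, ih]

lemma le_foldr_sup {l : List I₀} {a : I₀} (h : a ∈ l) : a ≤ l.foldr (· ⊔ ·) ⊥ :=
  (foldr_sup_le_iff l _).1 le_rfl a h

/-- sup of indices of a word. -/
noncomputable def wsup (w : CoprodI.Word (fun _ : I₀ => Λ)) : I₀ :=
  (w.toList.map Sigma.fst).foldr (· ⊔ ·) ⊥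

lemma wsup_le_iff {w : CoprodI.Word (fun _ : I₀ => Λ)} {c : I₀} :
    wsup w ≤ c ↔ ∀ l ∈ w.toList, Sigma.fst l ≤ c := by
  rw [wsup, foldr_sup_le_iff]
  constructor
  · intro h l hl; exact h _ (List.mem_map_of_mem hl)
  · rintro h a ha; obtain ⟨l, hl, rfl⟩ := List.mem_map.1 ha; exact h l hl

lemma le_wsup {w : CoprodI.Word (fun _ : I₀ => Λ)} {l} (h : l ∈ w.toList) :
    Sigma.fst l ≤ wsup w := wsup_le_iff.1 le_rfl l h

lemma wsup_smul_le (j : I₀) (m : Λ) (w : CoprodI.Word (fun _ : I₀ => Λ)) :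
    wsup (CoprodI.of (M := fun _ : I₀ => Λ) (i := j) m • w) ≤ j ⊔ wsup w := by
  rw [wsup_le_iff]
  rintro ⟨i, m₁⟩ hmem
  rw [CoprodI.Word.mem_smul_iff] at hmem
  rcases hmem with ⟨-, h⟩ | ⟨-, rfl, -⟩
  · exact le_sup_of_le_right (le_wsup h)
  · exact le_sup_left

lemma wsup_listprod_smul_le (l : List ((_ : I₀) × Λ)) (w : CoprodI.Word (fun _ : I₀ => Λ)) :
    wsup ((l.map fun p => CoprodI.of (M := fun _ : I₀ => Λ) (i := p.1) p.2).prod • w)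
      ≤ (l.map Sigma.fst).foldr (· ⊔ ·) ⊥ ⊔ wsup w := by
  induction l with
  | nil => simp
  | cons p l ih =>
    simp only [List.map_cons, List.prod_cons, mul_smul, List.foldr_cons]
    calc wsup _ ≤ p.1 ⊔ wsup ((l.map fun p =>
            CoprodI.of (M := fun _ : I₀ => Λ) (i := p.1) p.2).prod • w) :=
          wsup_smul_le _ _ _
      _ ≤ _ := by
          rw [sup_assoc]
          exact sup_le le_sup_left (le_sup_of_le_right ih)

lemma delta0_eq (x : CoprodI (fun _ : I₀ => Λ)) :
    delta0 x = wsup (CoprodI.Word.equiv x) := rfl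

lemma delta0_prod (w : CoprodI.Word (fun _ : I₀ => Λ)) : delta0 w.prod = wsup w := by
  show wsup (CoprodI.Word.equiv (CoprodI.Word.equiv.symm w)) = wsup w
  rw [Equiv.apply_symm_apply]

lemma eq_listprod (x : CoprodI (fun _ : I₀ => Λ)) :
    x = ((CoprodI.Word.equiv x).toList.map fun p =>
      CoprodI.of (M := fun _ : I₀ => Λ) (i := p.1) p.2).prod :=
  (CoprodI.Word.equiv.symm_apply_apply x).symm

lemma delta0_one : delta0 (1 : CoprodI (fun _ : I₀ => Λ)) = ⊥ := by
  have e : CoprodI.Word.equiv (1 : CoprodI (fun _ : I₀ => Λ)) = CoprodI.Word.empty := by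
    rw [show CoprodI.Word.equiv (1 : CoprodI (fun _ : I₀ => Λ))
        = (1 : CoprodI (fun _ : I₀ => Λ)) • CoprodI.Word.empty from rfl, one_smul]
  rw [delta0_eq, e]; rfl

lemma delta0_mul_le (x y : CoprodI (fun _ : I₀ => Λ)) :
    delta0 (x * y) ≤ delta0 x ⊔ delta0 y := by
  have e : CoprodI.Word.equiv (x * y) = x • CoprodI.Word.equiv y := by
    rw [show CoprodI.Word.equiv (x * y) = (x * y) • CoprodI.Word.empty from rfl, mul_smul]
    rfl
  rw [delta0_eq, e]
  conv_lhs => rw [eq_listprod x]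
  exact wsup_listprod_smul_le _ _

lemma delta0_listprod_le (l : List ((_ : I₀) × Λ)) :
    delta0 ((l.map fun p => CoprodI.of (M := fun _ : I₀ => Λ) (i := p.1) p.2).prod)
      ≤ (l.map Sigma.fst).foldr (· ⊔ ·) ⊥ := by
  have h := wsup_listprod_smul_le l (CoprodI.Word.empty (M := fun _ : I₀ => Λ))
  have h2 : wsup (CoprodI.Word.empty (M := fun _ : I₀ => Λ)) = ⊥ := rfl
  rw [h2, sup_bot_eq] at h
  exact h

lemma delta0_inv_le (x : CoprodI (fun _ : I₀ => Λ)) : delta0 x⁻¹ ≤ delta0 x := by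
  set l := (CoprodI.Word.equiv x).toList with hl
  have hx : x⁻¹ = ((l.reverse.map fun p => (⟨p.1, p.2⁻¹⟩ : (_ : I₀) × Λ)).map fun p =>
      CoprodI.of (M := fun _ : I₀ => Λ) (i := p.1) p.2).prod := by
    conv_lhs => rw [eq_listprod x]
    rw [List.prod_inv_reverse]
    rw [← List.map_reverse, ← List.map_reverse]
    simp only [List.map_map]
    rfl
  rw [hx]
  refine le_trans (delta0_listprod_le _) ?_
  rw [foldr_sup_le_iff]
  intro a ha
  simp only [List.map_map, List.mem_map, Function.comp] at ha
  obtain ⟨p, hp, rfl⟩ := ha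
  rw [List.mem_reverse] at hp
  exact le_foldr_sup (List.mem_map_of_mem (f := Sigma.fst) hp)

lemma delta0_inv (x : CoprodI (fun _ : I₀ => Λ)) : delta0 x⁻¹ = delta0 x := by
  refine le_antisymm (delta0_inv_le x) ?_
  have := delta0_inv_le x⁻¹
  rwa [inv_inv] at this

end Delta0Aux

open Delta0Aux in
/-- Let `I₀` be a join-semilattice with `0`, `Λ` a nontrivial group and
`G₀ = ∗_{a ∈ I₀} Λ_a`. Then (i) `δ₀` is a valuation; (ii) `δ₀` is surjective; and
(iii) for all `a, b ∈ I₀` there are `g, h ∈ G₀` with `δ₀ g = a`, `δ₀ h = b` and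
`δ₀ (g * h) = a ⊔ b`. -/
theorem stmt12 {I₀ : Type*} [SemilatticeSup I₀] [OrderBot I₀] [DecidableEq I₀]
    {Λ : Type*} [Group Λ] [Nontrivial Λ] [DecidableEq Λ] :
    -- (i) δ₀ is a valuation
    (delta0 (1 : Monoid.CoprodI (fun _ : I₀ => Λ)) = ⊥) ∧
    (∀ x : Monoid.CoprodI (fun _ : I₀ => Λ), delta0 x⁻¹ = delta0 x) ∧
    (∀ x y : Monoid.CoprodI (fun _ : I₀ => Λ), delta0 (x * y) ≤ delta0 x ⊔ delta0 y) ∧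
    -- (ii) δ₀ is surjective
    Function.Surjective (delta0 (I₀ := I₀) (Λ := Λ)) ∧
    -- (iii)
    (∀ a b : I₀, ∃ g h : Monoid.CoprodI (fun _ : I₀ => Λ),
      delta0 g = a ∧ delta0 h = b ∧ delta0 (g * h) = a ⊔ b) := by
  obtain ⟨k, hk⟩ := exists_ne (1 : Λ)
  -- single-letter word
  have hone : ∀ a : I₀, delta0 (CoprodI.of (M := fun _ : I₀ => Λ) (i := a) k) = a := by
    intro a
    have hw : (CoprodI.of (M := fun _ : I₀ => Λ) (i := a) k)
        = (⟨[⟨a, k⟩], by simpa using hk, by simp⟩ : CoprodI.Word (fun _ : I₀ => Λ)).prod := by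
      simp [CoprodI.Word.prod]
    rw [hw, delta0_prod]
    show a ⊔ ⊥ = a
    exact sup_bot_eq a
  refine ⟨delta0_one, delta0_inv, delta0_mul_le, ?_, ?_⟩
  · intro a
    exact ⟨_, hone a⟩
  · intro a b
    by_cases hab : a = b
    · subst hab
      by_cases ha : a = ⊥
      · subst ha
        exact ⟨1, 1, delta0_one, delta0_one, by rw [mul_one, delta0_one, sup_idem]⟩
      · -- g = of_a k, h = of_⊥ k * of_a k
        refine ⟨CoprodI.of (M := fun _ : I₀ => Λ) (i := a) k,
          CoprodI.of (M := fun _ : I₀ => Λ) (i := ⊥) k *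
            CoprodI.of (M := fun _ : I₀ => Λ) (i := a) k, hone a, ?_, ?_⟩
        · have hw : (CoprodI.of (M := fun _ : I₀ => Λ) (i := ⊥) k *
              CoprodI.of (M := fun _ : I₀ => Λ) (i := a) k)
              = (⟨[⟨⊥, k⟩, ⟨a, k⟩], by simpa using hk,
                  by simp only [List.isChain_cons_cons, List.isChain_singleton, and_true]; exact Ne.symm ha⟩ :
                CoprodI.Word (fun _ : I₀ => Λ)).prod := by
            simp [CoprodI.Word.prod]
          rw [hw, delta0_prod]
          show ⊥ ⊔ (a ⊔ ⊥) = a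
          simp
        · have hw : (CoprodI.of (M := fun _ : I₀ => Λ) (i := a) k *
              (CoprodI.of (M := fun _ : I₀ => Λ) (i := ⊥) k *
               CoprodI.of (M := fun _ : I₀ => Λ) (i := a) k))
              = (⟨[⟨a, k⟩, ⟨⊥, k⟩, ⟨a, k⟩], by simpa using hk,
                  by simp only [List.isChain_cons_cons, List.isChain_singleton, and_true]; exact ⟨ha, Ne.symm ha⟩⟩ :
                CoprodI.Word (fun _ : I₀ => Λ)).prod := by
            simp [CoprodI.Word.prod, mul_assoc]
          rw [hw, delta0_prod]
          show a ⊔ (⊥ ⊔ (a ⊔ ⊥)) = a ⊔ a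
          simp
    · refine ⟨CoprodI.of (M := fun _ : I₀ => Λ) (i := a) k,
        CoprodI.of (M := fun _ : I₀ => Λ) (i := b) k, hone a, hone b, ?_⟩
      have hw : (CoprodI.of (M := fun _ : I₀ => Λ) (i := a) k *
          CoprodI.of (M := fun _ : I₀ => Λ) (i := b) k)
          = (⟨[⟨a, k⟩, ⟨b, k⟩], by simpa using hk, by simpa using hab⟩ :
            CoprodI.Word (fun _ : I₀ => Λ)).prod := by
        simp [CoprodI.Word.prod]
      rw [hw, delta0_prod]
      show a ⊔ (b ⊔ ⊥) = a ⊔ b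
      simp
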